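/- For every x, y ∈ ℝ, the limit as a → 0⁺ of (1/a)·( h_a(x+y) − h_a(x−y) ) equals 2xy, where h_a(u) = (1/a)·log(exp(a·u) + exp(−a·u)). -/

import Mathlib

open Filter

/-- The log-sum-exponential function with scaling factor `a`. -/
noncomputable def lse (a u : ℝ) : ℝ :=
  (1 / a) * Real.log (Real.exp (a * u) + Real.exp (-(a * u)))

private lemma exp_add_exp_neg_pos (t : ℝ) : 0 < Real.exp t + Real.exp (-t) :=
  add_pos (Real.exp_pos _) (Real.exp_pos _)

private lemma hasDerivAt_phi (u a : ℝ) :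
    HasDerivAt (fun a : ℝ => Real.log (Real.exp (a * u) + Real.exp (-(a * u))))
      (u * Real.tanh (a * u)) a := by
  have h1 : HasDerivAt (fun a : ℝ => a * u) u a := hasDerivAt_mul_const u
  have h2 : HasDerivAt (fun a : ℝ => Real.exp (a * u)) (Real.exp (a * u) * u) a :=
    h1.exp
  have h3 : HasDerivAt (fun a : ℝ => Real.exp (-(a * u)))
      (Real.exp (-(a * u)) * (-u)) a :=
    h1.neg.exp
  have h4 := (h2.add h3).log (ne_of_gt (exp_add_exp_neg_pos (a * u)))
  convert h4 using 1
  · rfl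
  rw [Real.tanh_eq_sinh_div_cosh, Real.sinh_eq, Real.cosh_eq]
  simp only [Pi.add_apply]
  have hc : Real.exp (a * u) + Real.exp (-(a * u)) ≠ 0 :=
    ne_of_gt (exp_add_exp_neg_pos (a * u))
  field_simp
  ring

private lemma hasDerivAt_tanh_zero : HasDerivAt Real.tanh 1 0 := by
  have h : HasDerivAt (fun t : ℝ => Real.sinh t / Real.cosh t)
      ((Real.cosh 0 * Real.cosh 0 - Real.sinh 0 * Real.sinh 0) / Real.cosh 0 ^ 2) 0 :=
    (Real.hasDerivAt_sinh 0).div (Real.hasDerivAt_cosh 0) (ne_of_gt (Real.cosh_pos 0))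
  simp only [Real.cosh_zero, Real.sinh_zero] at h
  norm_num at h
  convert h using 1
  funext t
  exact Real.tanh_eq_sinh_div_cosh t

theorem rescaled_lse_correlator_tendsto_product (x y : ℝ) :
    Tendsto (fun a : ℝ => (1 / a) * (lse a (x + y) - lse a (x - y)))
      (nhdsWithin 0 (Set.Ioi 0)) (nhds (2 * x * y)) := by
  set u := x + y
  set v := x - y
  set f : ℝ → ℝ := fun a =>
    Real.log (Real.exp (a * u) + Real.exp (-(a * u))) -
    Real.log (Real.exp (a * v) + Real.exp (-(a * v))) with hf
  set f' : ℝ → ℝ := fun a => u * Real.tanh (a * u) - v * Real.tanh (a * v) with hf'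
  have hff' : ∀ a : ℝ, HasDerivAt f (f' a) a := fun a =>
    (hasDerivAt_phi u a).sub (hasDerivAt_phi v a)
  -- derivative of f' at 0 is u^2 - v^2
  have hd : HasDerivAt f' (u * u - v * v) 0 := by
    have h1 : HasDerivAt (fun a : ℝ => Real.tanh (a * u)) (1 * u) 0 := by
      have h0 : HasDerivAt Real.tanh 1 ((0:ℝ) * u) := by rw [zero_mul]; exact hasDerivAt_tanh_zero
      simpa [Function.comp_def] using h0.comp 0 (hasDerivAt_mul_const u (x := (0:ℝ)))
    have h2 : HasDerivAt (fun a : ℝ => Real.tanh (a * v)) (1 * v) 0 := by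
      have h0 : HasDerivAt Real.tanh 1 ((0:ℝ) * v) := by rw [zero_mul]; exact hasDerivAt_tanh_zero
      simpa [Function.comp_def] using h0.comp 0 (hasDerivAt_mul_const v (x := (0:ℝ)))
    have := ((h1.const_mul u).sub (h2.const_mul v))
    convert this using 1
    · rfl
    · rfl
    · rfl
    ring
  -- hence f' a / a tends to u^2 - v^2
  have hslope : Tendsto (fun a : ℝ => f' a / a) (nhdsWithin 0 (Set.Ioi 0))
      (nhds (u * u - v * v)) := by
    have h := hasDerivAt_iff_tendsto_slope.mp hd
    have hf'0 : f' 0 = 0 := by simp [hf']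
    have : Tendsto (slope f' 0) (nhdsWithin 0 (Set.Ioi 0)) (nhds (u * u - v * v)) :=
      h.mono_left (nhdsWithin_mono 0 (fun a ha => ne_of_gt ha))
    refine this.congr' ?_
    filter_upwards [self_mem_nhdsWithin] with a ha
    rw [slope_def_field, hf'0]
    simp only [sub_zero]
  have hdiv : Tendsto (fun a : ℝ => f' a / (2 * a)) (nhdsWithin 0 (Set.Ioi 0))
      (nhds (2 * x * y)) := by
    have : Tendsto (fun a : ℝ => f' a / a / 2) (nhdsWithin 0 (Set.Ioi 0))
        (nhds ((u * u - v * v) / 2)) := hslope.div_const 2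
    have heq : (u * u - v * v) / 2 = 2 * x * y := by simp [u, v]; ring
    rw [heq] at this
    refine this.congr ?_
    intro a
    rw [div_div]
    ring_nf
  -- L'Hopital
  have hLH : Tendsto (fun a : ℝ => f a / a ^ 2) (nhdsWithin 0 (Set.Ioi 0))
      (nhds (2 * x * y)) := by
    apply HasDerivAt.lhopital_zero_nhdsGT (f' := f') (g' := fun a => 2 * a)
    · filter_upwards with a; exact hff' a
    · filter_upwards with a
      simpa using (hasDerivAt_pow 2 a)
    · filter_upwards [self_mem_nhdsWithin] with a ha
      exact mul_ne_zero two_ne_zero (ne_of_gt ha)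
    · have hcont : ContinuousAt f 0 := (hff' 0).continuousAt
      have hf0 : f 0 = 0 := by simp [hf]
      have h := (hcont.continuousWithinAt (s := Set.Ioi 0)).tendsto
      rwa [hf0] at h
    · have : ContinuousAt (fun a : ℝ => a ^ 2) 0 := by fun_prop
      simpa using this.continuousWithinAt.tendsto
    · exact hdiv
  refine hLH.congr' ?_
  filter_upwards [self_mem_nhdsWithin] with a ha
  have hane : a ≠ 0 := ne_of_gt ha
  have key : ∀ p q : ℝ, (p - q) / a ^ 2 = (1/a) * ((1/a)*p - (1/a)*q) := by
    intro p q; rw [sq]; field_simp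
  simp only [lse]
  exact key _ _
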